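/- Let Z be standard normal, X_z = (Z - z conditioned on Z > z), and m(z) = E[X_z]. Let f : [0,∞) → [0,1] be continuous nondecreasing with lim_{x→∞} f(x) = 1, such that x ↦ -log(1 - f(x)) is concave. Then there is a universal constant C, independent of f and z, such that E[X_z f(X_z)] / E[f(X_z)] ≤ C·m(z) for all z ∈ ℝ. -/

import Mathlib

open MeasureTheory Set Filter

/-- The density on `(0,∞)` of `X_z = (Z - z | Z > z)` for a standard normal `Z`. -/
noncomputable def condDens (z x : ℝ) : ℝ :=
  Real.exp (-(x + z) ^ 2 / 2) / (∫ t in Set.Ioi z, Real.exp (-t ^ 2 / 2))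

/-- The conditional mean overshoot `m z = E[X_z]`. -/
noncomputable def condMean (z : ℝ) : ℝ :=
  Real.exp (-z ^ 2 / 2) / (∫ t in Set.Ioi z, Real.exp (-t ^ 2 / 2)) - z

open Real

noncomputable def Eg (z : ℝ) : ℝ := Real.exp (-z ^ 2 / 2)
noncomputable def Gg (z : ℝ) : ℝ := ∫ t in Set.Ioi z, Real.exp (-t ^ 2 / 2)

lemma Eg_pos (z : ℝ) : 0 < Eg z := Real.exp_pos _
lemma Eg_le_one (z : ℝ) : Eg z ≤ 1 := by
  rw [Eg, show (1:ℝ) = Real.exp 0 by simp]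
  apply Real.exp_le_exp.2; nlinarith [sq_nonneg z]

lemma Eg_anti {a b : ℝ} (ha : 0 ≤ a) (hab : a ≤ b) : Eg b ≤ Eg a := by
  rw [Eg, Eg]; apply Real.exp_le_exp.2; nlinarith

lemma Eg_eq (t : ℝ) : Eg t = Real.exp (-(1/2) * t ^ 2) := by rw [Eg]; ring_nf

lemma integrable_Eg : Integrable Eg := by
  simp only [funext Eg_eq]
  exact integrable_exp_neg_mul_sq (by norm_num)

lemma cont_Eg : Continuous Eg := by
  apply Real.continuous_exp.comp; continuity

lemma integrable_id_mul_Eg : Integrable (fun t => t * Eg t) := by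
  apply Integrable.mono' (g := fun t => Real.exp (-(1/4) * t ^ 2))
    (integrable_exp_neg_mul_sq (by norm_num))
  · exact (continuous_id.mul cont_Eg).aestronglyMeasurable
  · refine Eventually.of_forall fun t => ?_
    rw [norm_mul, Real.norm_eq_abs, Real.norm_eq_abs, abs_of_pos (Eg_pos t), Eg]
    have h1 : |t| ≤ Real.exp (t ^ 2 / 4) := by
      calc |t| ≤ 1 + t ^ 2 / 4 := by nlinarith [sq_abs t, sq_nonneg (|t| - 2)]
      _ ≤ Real.exp (t ^ 2 / 4) := Real.add_one_le_exp _ |>.trans_eq' (by ring_nf)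
    calc |t| * Real.exp (-t ^ 2 / 2) ≤ Real.exp (t ^ 2 / 4) * Real.exp (-t ^ 2 / 2) := by
          apply mul_le_mul_of_nonneg_right h1 (Real.exp_pos _).le
      _ = Real.exp (-(1/4) * t ^ 2) := by rw [← Real.exp_add]; ring_nf

lemma integrable_sq_mul_Eg : Integrable (fun t => t ^ 2 * Eg t) := by
  apply Integrable.mono' (g := fun t => 8 * Real.exp (-(1/4) * t ^ 2))
    ((integrable_exp_neg_mul_sq (by norm_num)).const_mul 8)
  · exact ((continuous_pow 2).mul cont_Eg).aestronglyMeasurable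
  · refine Eventually.of_forall fun t => ?_
    rw [norm_mul, Real.norm_eq_abs, Real.norm_eq_abs, abs_of_pos (Eg_pos t), Eg,
      abs_of_nonneg (sq_nonneg t)]
    have h1 : t ^ 2 ≤ 8 * Real.exp (t ^ 2 / 4) := by
      have := Real.add_one_le_exp (t ^ 2 / 4)
      nlinarith [sq_nonneg t]
    calc t ^ 2 * Real.exp (-t ^ 2 / 2) ≤ 8 * Real.exp (t ^ 2 / 4) * Real.exp (-t ^ 2 / 2) := by
          apply mul_le_mul_of_nonneg_right h1 (Real.exp_pos _).le
      _ = 8 * Real.exp (-(1/4) * t ^ 2) := by rw [mul_assoc, ← Real.exp_add]; ring_nf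

lemma Gg_def (z : ℝ) : Gg z = ∫ t in Set.Ioi z, Eg t := by rfl

lemma Gg_pos (z : ℝ) : 0 < Gg z := by
  rw [Gg_def]
  apply setIntegral_pos_iff_support_of_nonneg_ae ?_ (integrable_Eg.integrableOn) |>.2
  · have : (Function.support Eg) = univ := by
      ext x; simp [Function.support, (Eg_pos x).ne']
    rw [this]
    simpa using measure_Ioi_pos (volume : Measure ℝ) |>.trans_le le_rfl
  · exact Eventually.of_forall fun t => (Eg_pos t).le

lemma Gg_le (z : ℝ) : Gg z ≤ Real.sqrt (2 * π) := by
  rw [Gg_def]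
  calc (∫ t in Set.Ioi z, Eg t) ≤ ∫ t, Eg t :=
        setIntegral_le_integral integrable_Eg (Eventually.of_forall fun t => (Eg_pos t).le)
    _ = Real.sqrt (2 * π) := by
        simp only [funext Eg_eq]
        rw [integral_gaussian]; congr 1; rw [div_div_eq_mul_div]; ring

lemma Gg_anti : Antitone Gg := fun a b hab => by
  rw [Gg_def, Gg_def]
  apply setIntegral_mono_set integrable_Eg.integrableOn
    (Eventually.of_forall fun t => (Eg_pos t).le)
  exact HasSubset.Subset.eventuallyLE (Ioi_subset_Ioi hab)

lemma Gg_split {z w : ℝ} (h : z ≤ w) :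
    Gg z = (∫ t in Set.Ioc z w, Eg t) + Gg w := by
  rw [Gg_def, Gg_def, ← Set.Ioc_union_Ioi_eq_Ioi h,
    setIntegral_union (Set.Ioc_disjoint_Ioi le_rfl) measurableSet_Ioi
      integrable_Eg.integrableOn integrable_Eg.integrableOn]

lemma hasDerivAt_Eg (z : ℝ) : HasDerivAt Eg (-z * Eg z) z := by
  have h : HasDerivAt (fun t : ℝ => -t ^ 2 / 2) (-z) z := by
    have := (hasDerivAt_pow 2 z).neg.div_const 2
    simpa using this.congr_deriv (by ring)
  have h2 := h.exp
  have h3 : -z * Eg z = Real.exp (-z ^ 2 / 2) * -z := by rw [Eg]; ring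
  rw [h3]; exact h2

lemma tendsto_pow_mul_Eg (k : ℕ) : Tendsto (fun t => t ^ k * Eg t) atTop (nhds 0) := by
  apply squeeze_zero' (g := fun t => t ^ k * Real.exp (-t))
  · filter_upwards [eventually_ge_atTop (0:ℝ)] with t ht
    exact mul_nonneg (pow_nonneg ht k) (Real.exp_pos _).le
  · filter_upwards [eventually_ge_atTop (2:ℝ)] with t ht
    have : Eg t ≤ Real.exp (-t) := by
      rw [Eg]; apply Real.exp_le_exp.2; nlinarith
    exact mul_le_mul_of_nonneg_left this (by positivity)
  · exact tendsto_pow_mul_exp_neg_atTop_nhds_zero k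

lemma tendsto_Eg : Tendsto Eg atTop (nhds 0) := by
  have := tendsto_pow_mul_Eg 0; simpa using this

lemma integral_id_mul_Eg (z : ℝ) : ∫ t in Set.Ioi z, t * Eg t = Eg z := by
  have h : ∀ x ∈ Set.Ici z, HasDerivAt (fun t => -Eg t) (x * Eg x) x := by
    intro x _
    exact (hasDerivAt_Eg x).neg.congr_deriv (by ring)
  have ht : Tendsto (fun t => -Eg t) atTop (nhds 0) := by
    rw [show (0:ℝ) = -0 by norm_num]; exact tendsto_Eg.neg
  have := integral_Ioi_of_hasDerivAt_of_tendsto' h integrable_id_mul_Eg.integrableOn ht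
  simpa using this

lemma integral_sq_mul_Eg (z : ℝ) : ∫ t in Set.Ioi z, t ^ 2 * Eg t = z * Eg z + Gg z := by
  have h : ∀ x ∈ Set.Ici z, HasDerivAt (fun t => -(t * Eg t)) (x ^ 2 * Eg x - Eg x) x := by
    intro x _
    have := ((hasDerivAt_id x).mul (hasDerivAt_Eg x)).neg
    apply this.congr_deriv; simp [Eg]; ring
  have ht : Tendsto (fun t => -(t * Eg t)) atTop (nhds 0) := by
    rw [show (0:ℝ) = -0 by norm_num]
    exact (by simpa using tendsto_pow_mul_Eg 1 : Tendsto (fun t => t * Eg t) atTop (nhds 0)).neg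
  have hint : IntegrableOn (fun x => x ^ 2 * Eg x - Eg x) (Set.Ioi z) :=
    (integrable_sq_mul_Eg.sub integrable_Eg).integrableOn
  have := integral_Ioi_of_hasDerivAt_of_tendsto' h hint ht
  have h2 : ∫ t in Set.Ioi z, (t ^ 2 * Eg t - Eg t) =
      (∫ t in Set.Ioi z, t ^ 2 * Eg t) - ∫ t in Set.Ioi z, Eg t :=
    integral_sub integrable_sq_mul_Eg.integrableOn integrable_Eg.integrableOn
  rw [h2, ← Gg_def] at this
  linarith

lemma Gg_tendsto : Tendsto Gg atTop (nhds 0) := by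
  apply squeeze_zero' (Eventually.of_forall fun z => (Gg_pos z).le)
    (g := fun z => z⁻¹ * Eg z)
  · filter_upwards [eventually_gt_atTop (0:ℝ)] with z hz
    rw [Gg_def]
    have hle : ∀ t ∈ Set.Ioi z, Eg t ≤ z⁻¹ * (t * Eg t) := by
      intro t ht
      rw [Set.mem_Ioi] at ht
      have h1 : z * Eg t ≤ t * Eg t := by nlinarith [Eg_pos t]
      calc Eg t = z⁻¹ * (z * Eg t) := by field_simp
        _ ≤ z⁻¹ * (t * Eg t) := mul_le_mul_of_nonneg_left h1 (by positivity)
    calc (∫ t in Set.Ioi z, Eg t) ≤ ∫ t in Set.Ioi z, z⁻¹ * (t * Eg t) :=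
          setIntegral_mono_on integrable_Eg.integrableOn
            (integrable_id_mul_Eg.integrableOn.const_mul _) measurableSet_Ioi hle
      _ = z⁻¹ * Eg z := by rw [MeasureTheory.integral_const_mul, integral_id_mul_Eg]
  · simpa using tendsto_inv_atTop_zero.mul tendsto_Eg

lemma Gg_eq_sub (z : ℝ) : Gg z = Gg 0 - ∫ t in (0:ℝ)..z, Eg t := by
  rcases le_or_gt 0 z with h | h
  · rw [intervalIntegral.integral_of_le h]
    have := Gg_split h
    linarith
  · rw [intervalIntegral.integral_of_ge h.le]
    have := Gg_split h.le
    linarith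

lemma hasDerivAt_Gg (z : ℝ) : HasDerivAt Gg (-Eg z) z := by
  have h : HasDerivAt (fun u => ∫ t in (0:ℝ)..u, Eg t) (Eg z) z :=
    (cont_Eg.integral_hasStrictDerivAt 0 z).hasDerivAt
  have h2 := (hasDerivAt_const z (Gg 0)).sub h
  simp only [zero_sub] at h2
  exact h2.congr_of_eventuallyEq (Eventually.of_forall fun u => Gg_eq_sub u)

lemma nonneg_of_deriv (c : ℝ) (F F' : ℝ → ℝ)
    (hd : ∀ x ∈ Set.Ici c, HasDerivAt F (F' x) x)
    (hneg : ∀ x ∈ Set.Ici c, F' x ≤ 0)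
    (ht : Tendsto F atTop (nhds 0)) : ∀ x ∈ Set.Ici c, 0 ≤ F x := by
  intro x hx
  have hanti : AntitoneOn F (Set.Ici c) := by
    apply antitoneOn_of_deriv_nonpos (convex_Ici c)
    · intro y hy; exact (hd y hy).continuousAt.continuousWithinAt
    · intro y hy
      exact (hd y (interior_subset hy)).differentiableAt.differentiableWithinAt
    · intro y hy
      rw [(hd y (interior_subset hy)).deriv]
      exact hneg y (interior_subset hy)
  apply le_of_tendsto ht
  filter_upwards [eventually_ge_atTop x] with y hy
  exact hanti hx (Set.mem_Ici.2 (le_trans hx hy)) hy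

lemma mills_H (z : ℝ) : z * Eg z / (1 + z ^ 2) ≤ Gg z := by
  rcases le_or_gt z 0 with h | h
  · have : z * Eg z / (1 + z ^ 2) ≤ 0 := by
      apply div_nonpos_of_nonpos_of_nonneg
      · exact mul_nonpos_of_nonpos_of_nonneg h (Eg_pos z).le
      · positivity
    linarith [Gg_pos z]
  · have key := nonneg_of_deriv 0 (fun x => Gg x - x * Eg x / (1 + x ^ 2))
      (fun x => -2 * Eg x / (1 + x ^ 2) ^ 2) ?_ ?_ ?_ z (Set.mem_Ici.2 h.le)
    · linarith [key]
    · intro x _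
      have h1 : HasDerivAt (fun x : ℝ => x * Eg x) (Eg x + x * (-x * Eg x)) x :=
        (hasDerivAt_id x).mul (hasDerivAt_Eg x) |>.congr_deriv (by simp only [id_eq]; ring)
      have h2 : HasDerivAt (fun x : ℝ => 1 + x ^ 2) (2 * x) x := by
        exact ((hasDerivAt_const x (1:ℝ)).add (hasDerivAt_pow 2 x)).congr_deriv (by norm_num)
      have h3 := h1.div h2 (by positivity)
      have h4 := (hasDerivAt_Gg x).sub h3
      apply h4.congr_deriv
      field_simp
      ring
    · intro x _
      have := Eg_pos x
      apply div_nonpos_of_nonpos_of_nonneg (by nlinarith) (by positivity)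
    · have h1 : Tendsto (fun x => x * Eg x / (1 + x ^ 2)) atTop (nhds 0) := by
        apply squeeze_zero' (g := fun x => x⁻¹ * (x ^ 0 * Eg x))
        · filter_upwards [eventually_ge_atTop (0:ℝ)] with t ht
          exact div_nonneg (mul_nonneg ht (Eg_pos t).le) (by positivity)
        · filter_upwards [eventually_ge_atTop (1:ℝ)] with t ht
          rw [div_le_iff₀ (by positivity)]
          have h0 : (0:ℝ) < t := by linarith
          have : (1:ℝ) ≤ t^2 := by nlinarith
          rw [pow_zero, one_mul]
          calc t * Eg t = t⁻¹ * Eg t * t ^ 2 := by field_simp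
            _ ≤ t⁻¹ * Eg t * (1 + t ^ 2) := by
                apply mul_le_mul_of_nonneg_left (by linarith)
                  (mul_nonneg (inv_nonneg.2 h0.le) (Eg_pos t).le)
        · simpa using tendsto_inv_atTop_zero.mul (tendsto_pow_mul_Eg 0)
      simpa using Gg_tendsto.sub h1

lemma mills_U {z : ℝ} (hz : 2 ≤ z) : Gg z ≤ Eg z * (z ^ 4 - z ^ 2 + 3) / z ^ 5 := by
  have key := nonneg_of_deriv 2 (fun x => Eg x * (x ^ 4 - x ^ 2 + 3) / x ^ 5 - Gg x)
    (fun x => -15 * Eg x / x ^ 6) ?_ ?_ ?_ z (Set.mem_Ici.2 hz)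
  · linarith [key]
  · intro x hx
    have hx0 : (0:ℝ) < x := lt_of_lt_of_le two_pos hx
    have hnum : HasDerivAt (fun x : ℝ => x ^ 4 - x ^ 2 + 3) (4 * x ^ 3 - 2 * x) x := by
      simpa using ((hasDerivAt_pow 4 x).sub (hasDerivAt_pow 2 x)).add_const 3
    have hden : HasDerivAt (fun x : ℝ => x ^ 5) (5 * x ^ 4) x := by
      simpa using hasDerivAt_pow 5 x
    have h1 := ((hasDerivAt_Eg x).mul hnum).div hden (by positivity)
    have h2 := h1.sub (hasDerivAt_Gg x)
    apply h2.congr_deriv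
    simp only [Pi.mul_apply]
    field_simp
    ring
  · intro x hx
    have hx0 : (0:ℝ) < x := lt_of_lt_of_le two_pos hx
    apply div_nonpos_of_nonpos_of_nonneg ?_ (by positivity)
    nlinarith [Eg_pos x]
  · have h1 : Tendsto (fun x => Eg x * (x ^ 4 - x ^ 2 + 3) / x ^ 5) atTop (nhds 0) := by
      apply squeeze_zero' (g := fun x => 4 * (x⁻¹ * Eg x))
      · filter_upwards [eventually_ge_atTop (1:ℝ)] with t ht
        have h0 : (0:ℝ) < t := by linarith
        apply div_nonneg (mul_nonneg (Eg_pos t).le (by nlinarith [sq_nonneg (t^2-1)])) (by positivity)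
      · filter_upwards [eventually_ge_atTop (1:ℝ)] with t ht
        have h0 : (0:ℝ) < t := by linarith
        rw [div_le_iff₀ (by positivity)]
        have h4 : (1:ℝ) ≤ t ^ 2 := by nlinarith
        have h5 : (1:ℝ) ≤ t ^ 4 := by nlinarith
        have h2 : t ^ 4 - t ^ 2 + 3 ≤ 4 * t ^ 4 := by nlinarith
        calc Eg t * (t ^ 4 - t ^ 2 + 3) ≤ Eg t * (4 * t ^ 4) :=
              mul_le_mul_of_nonneg_left h2 (Eg_pos t).le
          _ = 4 * (t⁻¹ * Eg t) * t ^ 5 := by field_simp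
      · have := (tendsto_inv_atTop_zero.mul tendsto_Eg).const_mul (4:ℝ)
        simpa using this
    simpa using h1.sub Gg_tendsto

lemma integral_sub_mul_Eg (z : ℝ) :
    ∫ t in Set.Ioi z, (t - z) * Eg t = Eg z - z * Gg z := by
  have : ∀ t : ℝ, (t - z) * Eg t = t * Eg t - z * Eg t := fun t => by ring
  simp only [this]
  rw [integral_sub integrable_id_mul_Eg.integrableOn
    ((integrable_Eg.integrableOn).const_mul z), integral_id_mul_Eg,
    MeasureTheory.integral_const_mul, ← Gg_def]

lemma integral_sub_sq_mul_Eg (z : ℝ) :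
    ∫ t in Set.Ioi z, (t - z) ^ 2 * Eg t = (1 + z ^ 2) * Gg z - z * Eg z := by
  have : ∀ t : ℝ, (t - z) ^ 2 * Eg t = t ^ 2 * Eg t - (2*z) * (t * Eg t) + z ^ 2 * Eg t :=
    fun t => by ring
  simp only [this]
  have hI1 : IntegrableOn (fun t => t ^ 2 * Eg t - 2 * z * (t * Eg t)) (Set.Ioi z) volume :=
    (integrable_sq_mul_Eg.sub (integrable_id_mul_Eg.const_mul (2*z))).integrableOn
  have hI2 : IntegrableOn (fun t => z ^ 2 * Eg t) (Set.Ioi z) volume :=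
    (integrable_Eg.const_mul (z^2)).integrableOn
  rw [integral_add hI1 hI2,
    integral_sub integrable_sq_mul_Eg.integrableOn
      ((integrable_id_mul_Eg.integrableOn).const_mul (2*z)),
    integral_sq_mul_Eg, MeasureTheory.integral_const_mul,
    MeasureTheory.integral_const_mul, integral_id_mul_Eg, ← Gg_def]
  ring

lemma EsubzG_pos (z : ℝ) : 0 < Eg z - z * Gg z := by
  rw [← integral_sub_mul_Eg]
  apply (setIntegral_pos_iff_support_of_nonneg_ae ?_ ?_).2
  · have hss : Set.Ioi z \ {z} ⊆ (Function.support fun t => (t - z) * Eg t) ∩ Set.Ioi z := by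
      intro t ⟨ht, _⟩
      have htz : z < t := ht
      refine ⟨?_, ht⟩
      simp only [Function.mem_support]
      exact ne_of_gt (mul_pos (by linarith) (Eg_pos t))
    calc (0:ENNReal) < volume (Set.Ioi z \ {z}) := by
          rw [measure_diff_null (measure_singleton z)]
          simp
      _ ≤ _ := measure_mono hss
  · apply ae_restrict_of_forall_mem measurableSet_Ioi
    intro t ht
    have htz : z < t := ht
    exact le_of_lt (mul_pos (by linarith) (Eg_pos t))
  · apply Integrable.integrableOn
    have : (fun t => (t - z) * Eg t) = fun t => t * Eg t - z * Eg t := by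
      funext t; ring
    rw [this]
    exact integrable_id_mul_Eg.sub (integrable_Eg.const_mul z)

lemma m_pos (z : ℝ) : 0 < Eg z / Gg z - z := by
  have h := EsubzG_pos z
  have hG := Gg_pos z
  rw [sub_pos, lt_div_iff₀ hG]
  linarith

noncomputable def mm (z : ℝ) : ℝ := Eg z / Gg z - z

lemma mm_pos (z : ℝ) : 0 < mm z := m_pos z

lemma Eg_num : Eg 1 = Real.exp (-(1/2)) ∧ Eg 4 = Real.exp (-8) := by
  constructor <;> (rw [Eg]; norm_num)

lemma Eg_succ_le_Gg {z : ℝ} (hz : 0 ≤ z) : Eg (z + 1) ≤ Gg z := by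
  have h := Gg_split (by linarith : z ≤ z + 1)
  have h2 : Eg (z + 1) ≤ ∫ t in Set.Ioc z (z + 1), Eg t := by
    have h3 : ∫ t in Set.Ioc z (z + 1), Eg (z+1) ≤ ∫ t in Set.Ioc z (z + 1), Eg t := by
      apply setIntegral_mono_on (integrableOn_const (by simp))
        integrable_Eg.integrableOn measurableSet_Ioc
      intro t ht
      exact Eg_anti (by linarith [ht.1]) ht.2
    rwa [setIntegral_const, Real.volume_real_Ioc_of_le (by linarith), show z + 1 - z = 1 by ring,
      one_smul] at h3
  linarith [Gg_pos (z + 1)]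

lemma EsubzG_lb {z : ℝ} (hz : 0 ≤ z) : Eg (z + 2) ≤ Eg z - z * Gg z := by
  rw [← integral_sub_mul_Eg]
  have h1 : ∫ t in Set.Ioc (z+1) (z+2), (t - z) * Eg t ≤ ∫ t in Set.Ioi z, (t - z) * Eg t := by
    apply setIntegral_mono_set
    · apply Integrable.integrableOn
      have : (fun t => (t - z) * Eg t) = fun t => t * Eg t - z * Eg t := by funext t; ring
      rw [this]
      exact integrable_id_mul_Eg.sub (integrable_Eg.const_mul z)
    · apply ae_restrict_of_forall_mem measurableSet_Ioi
      intro t ht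
      have htz : z < t := ht
      exact le_of_lt (mul_pos (by linarith) (Eg_pos t))
    · apply HasSubset.Subset.eventuallyLE
      intro t ht
      exact Set.mem_Ioi.2 (by linarith [ht.1])
  have h2 : Eg (z+2) ≤ ∫ t in Set.Ioc (z+1) (z+2), (t - z) * Eg t := by
    have h3 : ∫ t in Set.Ioc (z+1) (z+2), Eg (z+2) ≤
        ∫ t in Set.Ioc (z+1) (z+2), (t - z) * Eg t := by
      apply setIntegral_mono_on (integrableOn_const (by simp))
      · apply Integrable.integrableOn
        have : (fun t => (t - z) * Eg t) = fun t => t * Eg t - z * Eg t := by funext t; ring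
        rw [this]
        exact integrable_id_mul_Eg.sub (integrable_Eg.const_mul z)
      · exact measurableSet_Ioc
      · intro t ht
        have e1 : Eg t ≥ Eg (z + 2) := Eg_anti (by linarith [ht.1]) ht.2
        nlinarith [Eg_pos t, ht.1, Eg_pos (z+2)]
    rwa [setIntegral_const, Real.volume_real_Ioc_of_le (by linarith), show z + 2 - (z+1) = 1 by ring,
      one_smul] at h3
  linarith

noncomputable def BB : ℝ := 2 + 1 / (2 * Gg 2)
noncomputable def C1 : ℝ :=
  Real.sqrt (2*π) * (3 + 2 * (Real.sqrt (2*π) / Eg 1) ^ 2) / Gg 1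
noncomputable def C2 : ℝ :=
  Real.sqrt (2*π) * (1 + 2 * (Real.sqrt (2*π) / Eg 4) ^ 2) / Gg BB
noncomputable def CC : ℝ := C1 + C2 + 808/3

lemma sqrt_2pi_pos : 0 < Real.sqrt (2*π) := Real.sqrt_pos.2 (by positivity)
lemma one_le_sqrt_2pi : 1 ≤ Real.sqrt (2*π) := by
  rw [show (1:ℝ) = Real.sqrt 1 by simp]
  exact Real.sqrt_le_sqrt (by nlinarith [Real.pi_gt_three])

lemma C1_pos : 0 < C1 := by
  apply div_pos ?_ (Gg_pos 1)
  have := sqrt_2pi_pos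
  positivity
lemma C2_pos : 0 < C2 := by
  apply div_pos ?_ (Gg_pos BB)
  have := sqrt_2pi_pos
  positivity
lemma CC_pos : 0 < CC := by
  have := C1_pos; have := C2_pos
  rw [CC]; linarith

lemma region1 {z : ℝ} (hz : z ≤ 0) :
    Gg z * (mm z ^ 2 + 2 * (1 - z * mm z)) ≤ C1 * mm z ^ 2 * Gg (z + mm z / 2) := by
  set m := mm z with hmdef
  have hm : 0 < m := mm_pos z
  have hGz := Gg_pos z
  rcases le_or_gt (m ^ 2 + 2 * (1 - z * m)) 0 with hX | hX
  · have h1 : Gg z * (m ^ 2 + 2 * (1 - z * m)) ≤ 0 := mul_nonpos_of_nonneg_of_nonpos hGz.le hX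
    have h2 : 0 ≤ C1 * m ^ 2 * Gg (z + m / 2) := by
      have := C1_pos; have := Gg_pos (z + m/2); positivity
    linarith
  -- m ≥ -z
  have hEGpos : 0 < Eg z / Gg z := div_pos (Eg_pos z) hGz
  have hmz : -z ≤ m := by rw [hmdef, mm]; linarith
  -- c0 ≤ m
  set c0 : ℝ := Eg 1 / Real.sqrt (2*π) with hc0def
  have hc0 : 0 < c0 := div_pos (Eg_pos 1) sqrt_2pi_pos
  have hc0m : c0 ≤ m := by
    rcases le_or_gt z (-1) with h1 | h1
    · have : (1:ℝ) ≤ m := by linarith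
      have hc01 : c0 ≤ 1 := by
        rw [hc0def, div_le_one sqrt_2pi_pos]
        exact le_trans (Eg_le_one 1) one_le_sqrt_2pi
      linarith
    · have hEg : Eg 1 ≤ Eg z := by
        rw [Eg, Eg]
        apply Real.exp_le_exp.2
        nlinarith
      have : c0 ≤ Eg z / Gg z :=
        div_le_div₀ (Eg_pos z).le hEg (Gg_pos z) (Gg_le z)
      rw [hmdef, mm]; linarith
  -- z + m/2 ≤ 1
  have hG0 : (1:ℝ)/2 ≤ Gg 0 := by
    have h1 : Eg (0 + 1) ≤ Gg 0 := Eg_succ_le_Gg le_rfl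
    have h2 : (1:ℝ)/2 ≤ Eg 1 := by
      rw [Eg_num.1, Real.exp_neg]
      have he : Real.exp ((1:ℝ)/2) ^ 2 = Real.exp 1 := by
        rw [sq, ← Real.exp_add]; norm_num
      have hle2 : Real.exp ((1:ℝ)/2) ≤ 2 := by
        nlinarith [Real.exp_pos ((1:ℝ)/2), Real.exp_one_lt_d9]
      have hp := Real.exp_pos ((1:ℝ)/2)
      have hinv : Real.exp ((1:ℝ)/2) * (Real.exp ((1:ℝ)/2))⁻¹ = 1 :=
        mul_inv_cancel₀ (ne_of_gt hp)
      nlinarith [inv_pos.2 hp]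
    norm_num at h1
    linarith
  have hzm2 : z + m / 2 ≤ 1 := by
    have hEGle : Eg z / Gg z ≤ 2 := by
      have : Eg z / Gg z ≤ 1 / Gg 0 :=
        div_le_div₀ (by norm_num) (Eg_le_one z) (Gg_pos 0) (Gg_anti hz)
      have h2 : 1 / Gg 0 ≤ 2 := by
        rw [div_le_iff₀ (Gg_pos 0)]; linarith
      linarith
    have : m = Eg z / Gg z - z := hmdef
    linarith
  have hGg1 : Gg 1 ≤ Gg (z + m / 2) := Gg_anti hzm2
  -- main bound
  have hXle : m ^ 2 + 2 * (1 - z * m) ≤ (3 + 2 * (Real.sqrt (2*π) / Eg 1) ^ 2) * m ^ 2 := by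
    have hzm : -z * m ≤ m ^ 2 := by nlinarith
    have hc0m2 : c0 ^ 2 ≤ m ^ 2 := by nlinarith
    have h2 : 2 ≤ 2 * (Real.sqrt (2*π) / Eg 1) ^ 2 * m ^ 2 := by
      have he : (Real.sqrt (2*π) / Eg 1) ^ 2 * c0 ^ 2 = 1 := by
        rw [hc0def, div_pow, div_pow, div_mul_div_comm, mul_comm]
        exact div_self (mul_pos (pow_pos (Eg_pos 1) 2) (pow_pos sqrt_2pi_pos 2)).ne'
      calc (2:ℝ) = 2 * ((Real.sqrt (2*π) / Eg 1) ^ 2 * c0 ^ 2) := by rw [he]; ring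
        _ ≤ 2 * ((Real.sqrt (2*π) / Eg 1) ^ 2 * m ^ 2) := by
            apply mul_le_mul_of_nonneg_left ?_ (by norm_num)
            exact mul_le_mul_of_nonneg_left hc0m2 (by positivity)
        _ = 2 * (Real.sqrt (2*π) / Eg 1) ^ 2 * m ^ 2 := by ring
    nlinarith
  calc Gg z * (m ^ 2 + 2 * (1 - z * m))
      ≤ Real.sqrt (2*π) * (m ^ 2 + 2 * (1 - z * m)) :=
        mul_le_mul_of_nonneg_right (Gg_le z) hX.le
    _ ≤ Real.sqrt (2*π) * ((3 + 2 * (Real.sqrt (2*π) / Eg 1) ^ 2) * m ^ 2) :=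
        mul_le_mul_of_nonneg_left hXle sqrt_2pi_pos.le
    _ = C1 * m ^ 2 * Gg 1 := by
        rw [C1]
        field_simp [(Gg_pos 1).ne']
    _ ≤ C1 * m ^ 2 * Gg (z + m / 2) := by
        apply mul_le_mul_of_nonneg_left hGg1
        have := C1_pos
        positivity

lemma region2 {z : ℝ} (hz0 : 0 ≤ z) (hz2 : z ≤ 2) :
    Gg z * (mm z ^ 2 + 2 * (1 - z * mm z)) ≤ C2 * mm z ^ 2 * Gg (z + mm z / 2) := by
  set m := mm z with hmdef
  have hm : 0 < m := mm_pos z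
  have hGz := Gg_pos z
  rcases le_or_gt (m ^ 2 + 2 * (1 - z * m)) 0 with hX | hX
  · have h1 : Gg z * (m ^ 2 + 2 * (1 - z * m)) ≤ 0 := mul_nonpos_of_nonneg_of_nonpos hGz.le hX
    have h2 : 0 ≤ C2 * m ^ 2 * Gg (z + m / 2) := by
      have := C2_pos; have := Gg_pos (z + m/2); positivity
    linarith
  set c1 : ℝ := Eg 4 / Real.sqrt (2*π) with hc1def
  have hc1 : 0 < c1 := div_pos (Eg_pos 4) sqrt_2pi_pos
  have hc1m : c1 ≤ m := by
    have hnum : Eg 4 ≤ Eg z - z * Gg z := by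
      have h1 := EsubzG_lb hz0
      have h2 : Eg 4 ≤ Eg (z + 2) := Eg_anti (by linarith) (by linarith)
      linarith
    have heq : m = (Eg z - z * Gg z) / Gg z := by
      rw [hmdef]; show Eg z / Gg z - z = _; field_simp
    rw [heq, hc1def]
    exact div_le_div₀ (by linarith [EsubzG_pos z]) hnum hGz (Gg_le z)
  -- z + m/2 ≤ BB
  have hmub : m ≤ 1 / Gg 2 := by
    have h1 : Eg z / Gg z ≤ 1 / Gg 2 :=
      div_le_div₀ (by norm_num) (Eg_le_one z) (Gg_pos 2) (Gg_anti hz2)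
    have : m = Eg z / Gg z - z := hmdef
    linarith
  have hzm2 : z + m / 2 ≤ BB := by rw [BB]; rw [div_mul_eq_div_div_swap]; linarith
  have hGgB : Gg BB ≤ Gg (z + m / 2) := Gg_anti hzm2
  have hXle : m ^ 2 + 2 * (1 - z * m) ≤ (1 + 2 * (Real.sqrt (2*π) / Eg 4) ^ 2) * m ^ 2 := by
    have hzm : 0 ≤ z * m := mul_nonneg hz0 hm.le
    have hc1m2 : c1 ^ 2 ≤ m ^ 2 := by nlinarith
    have h2 : 2 ≤ 2 * (Real.sqrt (2*π) / Eg 4) ^ 2 * m ^ 2 := by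
      have he : (Real.sqrt (2*π) / Eg 4) ^ 2 * c1 ^ 2 = 1 := by
        rw [hc1def, div_pow, div_pow, div_mul_div_comm, mul_comm]
        exact div_self (mul_pos (pow_pos (Eg_pos 4) 2) (pow_pos sqrt_2pi_pos 2)).ne'
      calc (2:ℝ) = 2 * ((Real.sqrt (2*π) / Eg 4) ^ 2 * c1 ^ 2) := by rw [he]; ring
        _ ≤ 2 * ((Real.sqrt (2*π) / Eg 4) ^ 2 * m ^ 2) := by
            apply mul_le_mul_of_nonneg_left ?_ (by norm_num)
            exact mul_le_mul_of_nonneg_left hc1m2 (by positivity)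
        _ = 2 * (Real.sqrt (2*π) / Eg 4) ^ 2 * m ^ 2 := by ring
    nlinarith
  calc Gg z * (m ^ 2 + 2 * (1 - z * m))
      ≤ Real.sqrt (2*π) * (m ^ 2 + 2 * (1 - z * m)) :=
        mul_le_mul_of_nonneg_right (Gg_le z) hX.le
    _ ≤ Real.sqrt (2*π) * ((1 + 2 * (Real.sqrt (2*π) / Eg 4) ^ 2) * m ^ 2) :=
        mul_le_mul_of_nonneg_left hXle sqrt_2pi_pos.le
    _ = C2 * m ^ 2 * Gg BB := by
        rw [C2]
        field_simp [(Gg_pos BB).ne']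
    _ ≤ C2 * m ^ 2 * Gg (z + m / 2) := by
        apply mul_le_mul_of_nonneg_left hGgB
        have := C2_pos
        positivity

lemma region3 {z : ℝ} (hz : 2 ≤ z) :
    Gg z * (mm z ^ 2 + 2 * (1 - z * mm z)) ≤ (808/3) * mm z ^ 2 * Gg (z + mm z / 2) := by
  set m := mm z with hmdef
  have hm : 0 < m := mm_pos z
  have hGz := Gg_pos z
  have hz0 : (0:ℝ) < z := by linarith
  have hden : (0:ℝ) < z ^ 4 - z ^ 2 + 3 := by nlinarith [sq_nonneg (z^2 - 1)]
  -- upper bound on Eg/Gg from mills_H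
  have hEG_ub : Eg z / Gg z ≤ (1 + z ^ 2) / z := by
    rw [div_le_div_iff₀ hGz hz0]
    have h := mills_H z
    rw [div_le_iff₀ (by positivity : (0:ℝ) < 1 + z ^ 2)] at h
    nlinarith
  have hm_ub : m ≤ 1 / z := by
    have : m = Eg z / Gg z - z := hmdef
    have h2 : (1 + z ^ 2) / z - z = 1 / z := by field_simp; ring
    linarith
  have hm_half : m ≤ 1 / 2 := le_trans hm_ub (by
    rw [div_le_div_iff₀ hz0 two_pos] <;> linarith)
  have hzm_le : z * m ≤ 1 := by
    calc z * m ≤ z * (1/z) := mul_le_mul_of_nonneg_left hm_ub hz0.le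
      _ = 1 := by field_simp
  -- lower bound from mills_U
  have hEG_lb : z ^ 5 / (z ^ 4 - z ^ 2 + 3) ≤ Eg z / Gg z := by
    rw [div_le_div_iff₀ hden hGz]
    have h := mills_U hz
    rw [le_div_iff₀ (by positivity : (0:ℝ) < z ^ 5)] at h
    nlinarith
  have hm_lb : (z ^ 3 - 3*z) / (z ^ 4 - z ^ 2 + 3) ≤ m := by
    have : m = Eg z / Gg z - z := hmdef
    have h2 : z ^ 5 / (z ^ 4 - z ^ 2 + 3) - z = (z ^ 3 - 3*z) / (z ^ 4 - z ^ 2 + 3) := by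
      rw [eq_div_iff hden.ne', sub_mul, div_mul_cancel₀ _ hden.ne']; ring
    linarith
  have hmp_nonneg : 0 ≤ (z ^ 3 - 3*z) / (z ^ 4 - z ^ 2 + 3) :=
    div_nonneg (by nlinarith) hden.le
  have h1zm : 1 - z * m ≤ (2*z ^ 2 + 3) / (z ^ 4 - z ^ 2 + 3) := by
    have hmeq : m = Eg z / Gg z - z := hmdef
    have h2 : 1 - z * m = 1 + z ^ 2 - z * (Eg z / Gg z) := by rw [hmeq]; ring
    have h3 : z * (z ^ 5 / (z ^ 4 - z ^ 2 + 3)) ≤ z * (Eg z / Gg z) :=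
      mul_le_mul_of_nonneg_left hEG_lb hz0.le
    have h4 : 1 + z ^ 2 - z * (z ^ 5 / (z ^ 4 - z ^ 2 + 3)) =
        (2*z ^ 2 + 3) / (z ^ 4 - z ^ 2 + 3) := by
      rw [eq_div_iff hden.ne', sub_mul, mul_div_assoc', div_mul_cancel₀ _ hden.ne']; ring
    linarith
  have hpoly : (2*z ^ 2 + 3) / (z ^ 4 - z ^ 2 + 3) ≤
      50 * ((z ^ 3 - 3*z) / (z ^ 4 - z ^ 2 + 3)) ^ 2 := by
    rw [div_pow, ← mul_div_assoc, div_le_div_iff₀ hden (by positivity)]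
    have hq : (2*z ^ 2 + 3) * (z ^ 4 - z ^ 2 + 3) ≤ 50 * (z ^ 3 - 3*z) ^ 2 := by
      nlinarith [sq_nonneg z, sq_nonneg (z^2 - 4), mul_nonneg (mul_nonneg hz0.le hz0.le) (sub_nonneg.2 (show (4:ℝ) ≤ z^2 by nlinarith))]
    nlinarith [mul_le_mul_of_nonneg_right hq hden.le]
  have h1zm2 : 1 - z * m ≤ 50 * m ^ 2 := by
    have h5 : ((z ^ 3 - 3*z) / (z ^ 4 - z ^ 2 + 3)) ^ 2 ≤ m ^ 2 :=
      pow_le_pow_left₀ hmp_nonneg hm_lb 2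
    linarith
  -- Gg (z + m/2) ≥ (3/8) Gg z
  have hEgz : Eg z = (m + z) * Gg z := by
    have h9 : m = Eg z / Gg z - z := hmdef
    rw [h9]
    field_simp
    ring
  have hsplit := Gg_split (show z ≤ z + m/2 by linarith)
  have hioc : (∫ t in Set.Ioc z (z + m/2), Eg t) ≤ (m/2) * Eg z := by
    have h3 : ∫ t in Set.Ioc z (z + m/2), Eg t ≤ ∫ t in Set.Ioc z (z + m/2), Eg z := by
      apply setIntegral_mono_on integrable_Eg.integrableOn
        (integrableOn_const (by simp)) measurableSet_Ioc
      intro t ht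
      exact Eg_anti (by linarith) ht.1.le
    rw [setIntegral_const, Real.volume_real_Ioc_of_le (by linarith), show z + m/2 - z = m/2 by ring,
      smul_eq_mul] at h3
    linarith
  have hGzm : (3/8) * Gg z ≤ Gg (z + m/2) := by
    have h4 : (m/2) * Eg z ≤ (5/8) * Gg z := by
      rw [hEgz]
      have : (m/2) * ((m + z) * Gg z) = ((m ^ 2 + z * m)/2) * Gg z := by ring
      rw [this]
      apply mul_le_mul_of_nonneg_right ?_ hGz.le
      nlinarith
    linarith
  -- conclude
  have hXle : m ^ 2 + 2 * (1 - z * m) ≤ 101 * m ^ 2 := by nlinarith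
  calc Gg z * (m ^ 2 + 2 * (1 - z * m)) ≤ Gg z * (101 * m ^ 2) :=
        mul_le_mul_of_nonneg_left hXle hGz.le
    _ = (808/3) * m ^ 2 * ((3/8) * Gg z) := by ring
    _ ≤ (808/3) * m ^ 2 * Gg (z + m/2) := by
        apply mul_le_mul_of_nonneg_left hGzm
        positivity

lemma key_ineq (z : ℝ) :
    Gg z * (mm z ^ 2 + 2 * (1 - z * mm z)) ≤ CC * mm z ^ 2 * Gg (z + mm z / 2) := by
  have hpos : 0 ≤ mm z ^ 2 * Gg (z + mm z / 2) :=
    mul_nonneg (sq_nonneg _) (Gg_pos _).le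
  have hC1 := C1_pos; have hC2 := C2_pos
  rcases le_or_gt z 0 with h | h
  · have := region1 h
    have hCC : C1 * mm z ^ 2 * Gg (z + mm z / 2) ≤ CC * mm z ^ 2 * Gg (z + mm z / 2) := by
      rw [CC]; nlinarith
    linarith
  rcases le_or_gt z 2 with h2 | h2
  · have := region2 h.le h2
    have hCC : C2 * mm z ^ 2 * Gg (z + mm z / 2) ≤ CC * mm z ^ 2 * Gg (z + mm z / 2) := by
      rw [CC]; nlinarith
    linarith
  · have := region3 h2.le
    have hCC : (808/3) * mm z ^ 2 * Gg (z + mm z / 2) ≤ CC * mm z ^ 2 * Gg (z + mm z / 2) := by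
      rw [CC]; nlinarith
    linarith

lemma shift_Ioi (g : ℝ → ℝ) (c z : ℝ) :
    ∫ t in Set.Ioi c, g (t + z) = ∫ u in Set.Ioi (c + z), g u := by
  rw [← integral_indicator measurableSet_Ioi, ← integral_indicator measurableSet_Ioi]
  have h : ∀ t, (Set.Ioi c).indicator (fun t => g (t + z)) t
      = (Set.Ioi (c + z)).indicator g (t + z) := by
    intro t
    by_cases h : t ∈ Set.Ioi c
    · rw [Set.indicator_of_mem h, Set.indicator_of_mem
        (by simp only [Set.mem_Ioi] at h ⊢; linarith)]
    · rw [Set.indicator_of_notMem h, Set.indicator_of_notMem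
        (by simp only [Set.mem_Ioi] at h ⊢; linarith)]
  simp only [h]
  exact integral_add_right_eq_self ((Set.Ioi (c + z)).indicator g) z

lemma intden (z c : ℝ) : ∫ t in Set.Ioi c, Eg (t + z) = Gg (c + z) := by
  rw [shift_Ioi Eg c z, Gg_def]

lemma intt (z : ℝ) : ∫ t in Set.Ioi 0, t * Eg (t + z) = Eg z - z * Gg z := by
  have h : ∀ t : ℝ, t * Eg (t + z) = (fun u => (u - z) * Eg u) (t + z) := by
    intro t; simp only []; ring_nf
  simp only [h]
  rw [shift_Ioi (fun u => (u - z) * Eg u) 0 z, zero_add, integral_sub_mul_Eg]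

lemma intt2 (z : ℝ) : ∫ t in Set.Ioi 0, t ^ 2 * Eg (t + z) = (1 + z ^ 2) * Gg z - z * Eg z := by
  have h : ∀ t : ℝ, t ^ 2 * Eg (t + z) = (fun u => (u - z) ^ 2 * Eg u) (t + z) := by
    intro t; simp only []; ring_nf
  simp only [h]
  rw [shift_Ioi (fun u => (u - z) ^ 2 * Eg u) 0 z, zero_add, integral_sub_sq_mul_Eg]

-- integrability of shifted integrands
lemma int_den_shift (z : ℝ) : Integrable (fun t => Eg (t + z)) :=
  integrable_Eg.comp_add_right z

lemma int_t_shift (z : ℝ) : Integrable (fun t : ℝ => t * Eg (t + z)) := by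
  have h : (fun t : ℝ => t * Eg (t + z))
      = fun t => (fun u => u * Eg u) (t + z) - z * Eg (t + z) := by
    funext t; simp only []; ring
  rw [h]
  exact (integrable_id_mul_Eg.comp_add_right z).sub ((integrable_Eg.comp_add_right z).const_mul z)

lemma int_t2_shift (z : ℝ) : Integrable (fun t : ℝ => t ^ 2 * Eg (t + z)) := by
  have h : (fun t : ℝ => t ^ 2 * Eg (t + z))
      = fun t => ((fun u => u ^ 2 * Eg u) (t + z) - 2 * z * ((fun u => u * Eg u) (t + z)))
          + z ^ 2 * Eg (t + z) := by
    funext t; simp only []; ring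
  rw [h]
  exact ((integrable_sq_mul_Eg.comp_add_right z).sub
    ((integrable_id_mul_Eg.comp_add_right z).const_mul (2 * z))).add
    ((integrable_Eg.comp_add_right z).const_mul (z ^ 2))

lemma bern {lam s : ℝ} (hl : 1 ≤ lam) (hs : 0 ≤ s) :
    1 - Real.exp (-(lam * s)) ≤ lam * (1 - Real.exp (-s)) := by
  set u := Real.exp (-s) with hu
  have hu0 : 0 < u := Real.exp_pos _
  have hu1 : u ≤ 1 := Real.exp_le_one_iff.2 (by linarith)
  have hrpow : Real.exp (-(lam * s)) = u ^ lam := by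
    rw [Real.rpow_def_of_pos hu0, hu, Real.log_exp]
    congr 1; ring
  have hbern : 1 + lam * (u - 1) ≤ (1 + (u - 1)) ^ lam :=
    one_add_mul_self_le_rpow_one_add (by linarith) hl
  have : (1 + (u - 1)) = u := by ring
  rw [this] at hbern
  rw [hrpow]
  linarith

lemma f_prop (f : ℝ → ℝ) (hcont : ContinuousOn f (Set.Ici 0))
    (hmono : MonotoneOn f (Set.Ici 0))
    (hbd : ∀ x ∈ Set.Ici (0:ℝ), 0 ≤ f x ∧ f x ≤ 1)
    (hconc : ConcaveOn ℝ (Set.Ici 0) (fun x => -Real.log (1 - f x))) :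
    ∀ a t : ℝ, 0 < a → 0 ≤ t → f t ≤ f a * (1 + t / a) := by
  set q : ℝ → ℝ := fun x => -Real.log (1 - f x) with hqdef
  by_cases hall : ∀ x ∈ Set.Ici (0:ℝ), f x < 1
  · intro a t ha ht
    have haI : a ∈ Set.Ici (0:ℝ) := Set.mem_Ici.2 ha.le
    have htI : t ∈ Set.Ici (0:ℝ) := Set.mem_Ici.2 ht
    have hfa0 : 0 ≤ f a := (hbd a haI).1
    rcases le_or_gt t a with hta | hat
    · have h1 : f t ≤ f a := hmono htI haI hta
      nlinarith [div_nonneg ht ha.le]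
    · have ht0 : 0 < t := lt_trans ha hat
      have hq0 : ∀ x ∈ Set.Ici (0:ℝ), 0 ≤ q x := by
        intro x hx
        have h1 := (hbd x hx).1; have h2 := hall x hx
        simp only [hqdef, neg_nonneg]
        exact Real.log_nonpos (by linarith) (by linarith)
      have hle1 : 0 ≤ 1 - a / t := by
        rw [sub_nonneg, div_le_one ht0]; exact hat.le
      have hle2 : (0:ℝ) ≤ a / t := div_nonneg ha.le ht0.le
      have hcomb := hconc.2 (Set.mem_Ici.2 le_rfl) htI hle1 hle2 (by ring)
      have hpoint : (1 - a / t) • (0:ℝ) + (a / t) • t = a := by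
        simp only [smul_eq_mul]; field_simp; ring
      rw [hpoint] at hcomb
      have hq0' := hq0 0 (Set.mem_Ici.2 le_rfl)
      have hqa := hq0 a haI
      have hqt := hq0 t htI
      have hsmul : (1 - a / t) * q 0 + (a / t) * q t ≤ q a := hcomb
      have hkey : (a / t) * q t ≤ q a := by nlinarith [mul_nonneg hle1 hq0']
      have hqt_le : q t ≤ (t / a) * q a := by
        rw [div_mul_eq_mul_div, le_div_iff₀ ha, mul_comm t (q a)]
        calc q t * a = (a / t) * q t * t := by field_simp
          _ ≤ q a * t := by nlinarith [mul_le_mul_of_nonneg_right hkey ht0.le]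
      have hf_eq : ∀ x ∈ Set.Ici (0:ℝ), f x = 1 - Real.exp (-q x) := by
        intro x hx
        have h1 := (hbd x hx).1; have h2 := hall x hx
        simp only [hqdef, neg_neg]
        rw [Real.exp_log (by linarith)]
        ring
      have hlam : 1 ≤ t / a := by rw [le_div_iff₀ ha]; linarith
      calc f t = 1 - Real.exp (-q t) := hf_eq t htI
        _ ≤ 1 - Real.exp (-((t/a) * q a)) := by
            have := Real.exp_le_exp.2 (neg_le_neg hqt_le)
            linarith
        _ ≤ (t/a) * (1 - Real.exp (-q a)) := bern hlam hqa
        _ = (t/a) * f a := by rw [hf_eq a haI]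
        _ ≤ f a * (1 + t / a) := by nlinarith
  · -- f attains 1; show f ≡ 1 on Ici 0
    push_neg at hall
    obtain ⟨x₀, hx₀I, hx₀⟩ := hall
    have hfx₀ : f x₀ = 1 := le_antisymm (hbd x₀ hx₀I).2 hx₀
    have hf0 : f 0 = 1 := by
      by_contra hne
      have hf0lt : f 0 < 1 := lt_of_le_of_ne (hbd 0 (Set.mem_Ici.2 le_rfl)).2 hne
      have hx₀pos : 0 < x₀ := by
        rcases eq_or_lt_of_le (Set.mem_Ici.1 hx₀I) with h | h
        · exact absurd (h ▸ hfx₀) hne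
        · exact h
      set w := x₀ + 1 with hwdef
      have hwI : w ∈ Set.Ici (0:ℝ) := Set.mem_Ici.2 (by linarith)
      have hfw : f w = 1 := le_antisymm (hbd w hwI).2
        (by rw [← hfx₀]; exact hmono hx₀I hwI (by linarith))
      have hqx₀ : q x₀ = 0 := by simp [hqdef, hfx₀]
      have hqw : q w = 0 := by simp [hqdef, hfw]
      have hzo : ∀ b, 0 ≤ b → b < x₀ → f b = 0 ∨ f b = 1 := by
        intro b hb hbx
        by_cases hfb1 : f b = 1
        · exact Or.inr hfb1
        have hbI : b ∈ Set.Ici (0:ℝ) := Set.mem_Ici.2 hb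
        have hfblt : f b < 1 := lt_of_le_of_ne (hbd b hbI).2 hfb1
        have hfb0 : 0 ≤ f b := (hbd b hbI).1
        have hwb : 0 < w - b := by simp only [hwdef]; linarith
        set lam := (w - x₀) / (w - b) with hlamdef
        have hlampos : 0 < lam := div_pos (by simp only [hwdef]; linarith) hwb
        have hlamle : lam ≤ 1 := by
          rw [hlamdef, div_le_one hwb]; linarith
        have hcomb := hconc.2 hbI hwI hlampos.le (by linarith : (0:ℝ) ≤ 1 - lam) (by ring)
        have hpoint : lam • b + (1 - lam) • w = x₀ := by
          simp only [smul_eq_mul, hlamdef]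
          field_simp
          ring
        rw [hpoint] at hcomb
        have hcomb2 : lam * q b + (1 - lam) * q w ≤ q x₀ := hcomb
        rw [hqw, hqx₀] at hcomb2
        have hqb_le : q b ≤ 0 := by nlinarith
        have hqb_ge : 0 ≤ q b := by
          simp only [hqdef, neg_nonneg]
          exact Real.log_nonpos (by linarith) (by linarith)
        have hqb : Real.log (1 - f b) = 0 := by
          have : q b = 0 := le_antisymm hqb_le hqb_ge
          simpa [hqdef, neg_eq_zero] using this
        rcases Real.log_eq_zero.1 hqb with h | h | h
        · linarith
        · left; linarith
        · linarith
      set v := (f 0 + 1) / 2 with hvdef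
      have hv1 : v < 1 := by rw [hvdef]; linarith
      have hv2 : f 0 < v := by rw [hvdef]; linarith
      have hv0 : 0 < v := by
        have := (hbd 0 (Set.mem_Ici.2 le_rfl)).1
        rw [hvdef]; linarith
      have hmemv : v ∈ Set.Icc (f 0) (f x₀) := by
        rw [hfx₀]; exact ⟨hv2.le, hv1.le⟩
      have hsub : Set.Icc (0:ℝ) x₀ ⊆ Set.Ici 0 := fun x hx => Set.mem_Ici.2 hx.1
      obtain ⟨b, hbmem, hfb⟩ := intermediate_value_Icc hx₀pos.le (hcont.mono hsub) hmemv
      rcases eq_or_lt_of_le hbmem.2 with h | h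
      · rw [h, hfx₀] at hfb; linarith
      · rcases hzo b hbmem.1 h with h2 | h2 <;> rw [h2] at hfb <;> linarith
    intro a t ha ht
    have haI : a ∈ Set.Ici (0:ℝ) := Set.mem_Ici.2 ha.le
    have htI : t ∈ Set.Ici (0:ℝ) := Set.mem_Ici.2 ht
    have hfa : f a = 1 := le_antisymm (hbd a haI).2
      (by rw [← hf0]; exact hmono (Set.mem_Ici.2 le_rfl) haI ha.le)
    have hft : f t ≤ 1 := (hbd t htI).2
    have : (0:ℝ) ≤ t / a := div_nonneg ht ha.le
    rw [hfa]; linarith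


theorem weighted_mean_upper_bound :
    ∃ C > (0 : ℝ), ∀ (f : ℝ → ℝ) (z : ℝ),
      ContinuousOn f (Set.Ici 0) →
      MonotoneOn f (Set.Ici 0) →
      (∀ x ∈ Set.Ici (0 : ℝ), 0 ≤ f x ∧ f x ≤ 1) →
      Tendsto f atTop (nhds 1) →
      ConcaveOn ℝ (Set.Ici 0) (fun x => -Real.log (1 - f x)) →
      (∫ t in Set.Ioi (0 : ℝ), t * f t * condDens z t) /
          (∫ t in Set.Ioi (0 : ℝ), f t * condDens z t) ≤ C * condMean z := by
  refine ⟨CC, CC_pos, fun f z hcont hmono hbd _ hconc => ?_⟩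
  have hcm : condMean z = mm z := rfl
  have hcd : ∀ t : ℝ, condDens z t = Eg (t + z) / Gg z := fun t => rfl
  have hGz := Gg_pos z
  have hm := mm_pos z
  set m := mm z with hmdef
  have hm2 : (0:ℝ) < m / 2 := by linarith
  rw [hcm]
  -- rewrite integrals
  set N := ∫ t in Set.Ioi (0:ℝ), t * f t * Eg (t + z) with hNdef
  set D := ∫ t in Set.Ioi (0:ℝ), f t * Eg (t + z) with hDdef
  have hNr : (∫ t in Set.Ioi (0:ℝ), t * f t * condDens z t) = N / Gg z := by
    rw [hNdef, ← integral_div]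
    apply setIntegral_congr_fun measurableSet_Ioi
    intro t _
    simp only [hcd]
    ring
  have hDr : (∫ t in Set.Ioi (0:ℝ), f t * condDens z t) = D / Gg z := by
    rw [hDdef, ← integral_div]
    apply setIntegral_congr_fun measurableSet_Ioi
    intro t _
    simp only [hcd]
    ring
  rw [hNr, hDr, div_div_div_comm, div_self hGz.ne', div_one]
  -- basic measurability / integrability
  have hfmeas : AEStronglyMeasurable f (volume.restrict (Set.Ioi 0)) :=
    (hcont.mono (Set.Ioi_subset_Ici_self)).aestronglyMeasurable measurableSet_Ioi
  have hEmeas : Continuous (fun t : ℝ => Eg (t + z)) :=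
    cont_Eg.comp (continuous_id.add continuous_const)
  have hfb : ∀ t ∈ Set.Ioi (0:ℝ), 0 ≤ f t ∧ f t ≤ 1 :=
    fun t ht => hbd t (Set.mem_Ici.2 (le_of_lt ht))
  have hI_den : IntegrableOn (fun t => Eg (t + z)) (Set.Ioi 0) :=
    (int_den_shift z).integrableOn
  have hI_t : IntegrableOn (fun t : ℝ => t * Eg (t + z)) (Set.Ioi 0) :=
    (int_t_shift z).integrableOn
  have hI_t2 : IntegrableOn (fun t : ℝ => t ^ 2 * Eg (t + z)) (Set.Ioi 0) :=
    (int_t2_shift z).integrableOn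
  have hI_fE : IntegrableOn (fun t => f t * Eg (t + z)) (Set.Ioi 0) := by
    apply Integrable.mono hI_den (hfmeas.mul (hEmeas.aestronglyMeasurable.restrict))
    apply ae_restrict_of_forall_mem measurableSet_Ioi
    intro t ht
    show ‖f t * Eg (t + z)‖ ≤ ‖Eg (t + z)‖
    rw [norm_mul, Real.norm_eq_abs, Real.norm_eq_abs, abs_of_pos (Eg_pos (t + z)),
      abs_of_nonneg (hfb t ht).1]
    nlinarith [(hfb t ht).2, Eg_pos (t + z)]
  have hI_tfE : IntegrableOn (fun t : ℝ => t * f t * Eg (t + z)) (Set.Ioi 0) := by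
    apply Integrable.mono hI_t
      ((continuous_id.aestronglyMeasurable.restrict.mul hfmeas).mul
        hEmeas.aestronglyMeasurable.restrict)
    apply ae_restrict_of_forall_mem measurableSet_Ioi
    intro t ht
    have ht0 : (0:ℝ) < t := ht
    show ‖t * f t * Eg (t + z)‖ ≤ ‖t * Eg (t + z)‖
    rw [Real.norm_eq_abs, Real.norm_eq_abs, abs_of_pos (mul_pos ht0 (Eg_pos (t + z))),
      abs_of_nonneg (mul_nonneg (mul_nonneg ht0.le (hfb t ht).1) (Eg_pos (t + z)).le)]
    calc t * f t * Eg (t + z) = f t * (t * Eg (t + z)) := by ring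
      _ ≤ 1 * (t * Eg (t + z)) :=
          mul_le_mul_of_nonneg_right (hfb t ht).2 (mul_pos ht0 (Eg_pos _)).le
      _ = t * Eg (t + z) := one_mul _
  have hD_nonneg : 0 ≤ D := by
    rw [hDdef]
    apply setIntegral_nonneg measurableSet_Ioi
    intro t ht
    exact mul_nonneg (hfb t ht).1 (Eg_pos (t + z)).le
  -- key pointwise bound and N upper bound
  have hfa0 : 0 ≤ f (m / 2) := (hbd _ (Set.mem_Ici.2 hm2.le)).1
  have hfprop := f_prop f hcont hmono hbd hconc (m / 2)
  have hNle : N ≤ f (m / 2) * ((Eg z - z * Gg z) + (2 / m) * ((1 + z ^ 2) * Gg z - z * Eg z)) := by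
    have hcomb : IntegrableOn
        (fun t : ℝ => f (m/2) * (t * Eg (t + z) + (2 / m) * (t ^ 2 * Eg (t + z))))
        (Set.Ioi 0) := ((hI_t.add (hI_t2.const_mul (2 / m))).const_mul _)
    have hstep : N ≤ ∫ t in Set.Ioi (0:ℝ),
        f (m/2) * (t * Eg (t + z) + (2 / m) * (t ^ 2 * Eg (t + z))) := by
      rw [hNdef]
      apply setIntegral_mono_on hI_tfE hcomb measurableSet_Ioi
      intro t ht
      have ht0 : (0:ℝ) < t := ht
      have h1 := hfprop t hm2 ht0.le
      have heq : f (m/2) * (1 + t / (m/2)) * (t * Eg (t + z))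
          = f (m/2) * (t * Eg (t + z) + (2 / m) * (t ^ 2 * Eg (t + z))) := by
        field_simp
      calc t * f t * Eg (t + z) = f t * (t * Eg (t + z)) := by ring
        _ ≤ f (m/2) * (1 + t / (m/2)) * (t * Eg (t + z)) :=
            mul_le_mul_of_nonneg_right h1 (mul_pos ht0 (Eg_pos (t + z))).le
        _ = _ := heq
    have hval : ∫ t in Set.Ioi (0:ℝ),
        f (m/2) * (t * Eg (t + z) + (2 / m) * (t ^ 2 * Eg (t + z)))
        = f (m/2) * ((Eg z - z * Gg z) + (2 / m) * ((1 + z ^ 2) * Gg z - z * Eg z)) := by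
      rw [MeasureTheory.integral_const_mul,
        integral_add hI_t (hI_t2.const_mul (2 / m)), MeasureTheory.integral_const_mul,
        intt z, intt2 z]
    linarith [hstep, hval.le, hval.ge]
  -- D lower bound
  have hD_lb : f (m / 2) * Gg (m / 2 + z) ≤ D := by
    have h1 : ∫ t in Set.Ioi (m/2), f t * Eg (t + z) ≤ D := by
      rw [hDdef]
      apply setIntegral_mono_set hI_fE
      · apply ae_restrict_of_forall_mem measurableSet_Ioi
        intro t ht
        exact mul_nonneg (hfb t ht).1 (Eg_pos (t + z)).le
      · exact HasSubset.Subset.eventuallyLE (Set.Ioi_subset_Ioi hm2.le)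
    have h2 : ∫ t in Set.Ioi (m/2), f (m/2) * Eg (t + z)
        ≤ ∫ t in Set.Ioi (m/2), f t * Eg (t + z) := by
      apply setIntegral_mono_on ((hI_den.mono_set (Set.Ioi_subset_Ioi hm2.le)).const_mul _)
        (hI_fE.mono_set (Set.Ioi_subset_Ioi hm2.le)) measurableSet_Ioi
      intro t ht
      have htm : m/2 < t := ht
      exact mul_le_mul_of_nonneg_right
        (hmono (Set.mem_Ici.2 hm2.le) (Set.mem_Ici.2 (by linarith)) htm.le)
        (Eg_pos (t + z)).le
    have h3 : ∫ t in Set.Ioi (m/2), f (m/2) * Eg (t + z) = f (m/2) * Gg (m/2 + z) := by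
      rw [MeasureTheory.integral_const_mul, intden z (m/2)]
    linarith
  -- conclude
  have hEGid : Eg z - z * Gg z = m * Gg z := by
    have h9 : m = Eg z / Gg z - z := hmdef
    rw [h9]; field_simp
  have hEGid2 : (1 + z ^ 2) * Gg z - z * Eg z = (1 - z * m) * Gg z := by
    have h9 : m = Eg z / Gg z - z := hmdef
    rw [h9]; field_simp; ring
  have hkey := key_ineq z
  have hNle2 : N ≤ CC * m * (f (m/2) * Gg (z + m / 2)) := by
    have e1 : f (m / 2) * ((Eg z - z * Gg z) + (2 / m) * ((1 + z ^ 2) * Gg z - z * Eg z))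
        = (f (m/2) / m) * (Gg z * (m ^ 2 + 2 * (1 - z * m))) := by
      rw [hEGid, hEGid2]
      field_simp
      try exact Or.inl trivial
    have e2 : (f (m/2) / m) * (Gg z * (m ^ 2 + 2 * (1 - z * m)))
        ≤ (f (m/2) / m) * (CC * m ^ 2 * Gg (z + m / 2)) :=
      mul_le_mul_of_nonneg_left hkey (div_nonneg hfa0 hm.le)
    have e3 : (f (m/2) / m) * (CC * m ^ 2 * Gg (z + m / 2))
        = CC * m * (f (m/2) * Gg (z + m / 2)) := by
      field_simp
    rw [e1] at hNle
    linarith [hNle, e2, e3.le, e3.ge]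
  have hzma : z + m / 2 = m / 2 + z := by ring
  rw [hzma] at hNle2
  rcases eq_or_lt_of_le hD_nonneg with hD0 | hD0
  · rw [← hD0, div_zero]
    exact mul_nonneg CC_pos.le hm.le
  · rw [div_le_iff₀ hD0]
    have : CC * m * (f (m/2) * Gg (m/2 + z)) ≤ CC * m * D :=
      mul_le_mul_of_nonneg_left hD_lb (mul_nonneg CC_pos.le hm.le)
    calc N ≤ CC * m * (f (m/2) * Gg (m/2 + z)) := hNle2
      _ ≤ CC * m * D := this
      _ = CC * m * D := rfl
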